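/- The transport–transform distance τ = τ_{C,p} is a metric on the space of finite point patterns over a metric space (X,d), where for ξ = Σᵢδ_{xᵢ} (m points) and η = Σⱼδ_{yⱼ} (n points), τ(ξ,η)^p is the minimum over all partial matchings (pairwise distinct i₁,…,i_l ∈ [m], pairwise distinct j₁,…,j_l ∈ [n]) of (m+n−2l)C^p + Σ_{r=1}^l d(x_{i_r},y_{j_r})^p, with C > 0 and p ≥ 1. -/

import Mathlib

/-- `p`-th power of the transport-transform distance between finite point patterns
(multisets): minimum over partial matchings (given by a multiset `γ` of matched pairs,
whose marginals are sub-multisets of `ξ` and `η`) of the penalized matching cost. -/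
noncomputable def ttP {X : Type*} [MetricSpace X] (C p : ℝ) (ξ η : Multiset X) : ℝ :=
  sInf { c : ℝ | ∃ γ : Multiset (X × X),
    γ.map Prod.fst ≤ ξ ∧ γ.map Prod.snd ≤ η ∧
    c = ((Multiset.card ξ : ℝ) + Multiset.card η - 2 * Multiset.card γ) * C ^ p
        + (γ.map (fun z => dist z.1 z.2 ^ p)).sum }

/-- The transport-transform (TT) distance `τ_{C,p}`. -/
noncomputable def ttDist {X : Type*} [MetricSpace X] (C p : ℝ) (ξ η : Multiset X) : ℝ :=
  ttP C p ξ η ^ (1 / p)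

namespace TTProof

/-- Extract a sub-multiset with prescribed image. -/
lemma exists_le_map {α β : Type*} (f : α → β) :
    ∀ (m : Multiset β) (s : Multiset α), m ≤ s.map f → ∃ t, t ≤ s ∧ t.map f = m := by
  classical
  intro m
  induction m using Multiset.induction with
  | empty => exact fun s _ => ⟨0, Multiset.zero_le _, by simp⟩
  | cons a m ih =>
    intro s hle
    have ha : a ∈ s.map f := Multiset.mem_of_le hle (Multiset.mem_cons_self _ _)
    obtain ⟨b, hb, rfl⟩ := Multiset.mem_map.1 ha
    have hs : s.map f = f b ::ₘ (s.erase b).map f := by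
      rw [← Multiset.map_cons, Multiset.cons_erase hb]
    rw [hs] at hle
    have hm : m ≤ (s.erase b).map f := (Multiset.cons_le_cons_iff _).1 hle
    obtain ⟨t, ht, rfl⟩ := ih (s.erase b) hm
    refine ⟨b ::ₘ t, ?_, by rw [Multiset.map_cons]⟩
    calc b ::ₘ t ≤ b ::ₘ s.erase b := Multiset.cons_le_cons b ht
    _ = s := Multiset.cons_erase hb

/-- Glue two matchings along a common marginal. -/
lemma glue {α β γ : Type*} :
    ∀ (A : Multiset (α × β)) (B : Multiset (β × γ)), A.map Prod.snd = B.map Prod.fst →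
    ∃ T : Multiset (α × β × γ),
      T.map (fun t => (t.1, t.2.1)) = A ∧ T.map Prod.snd = B := by
  classical
  intro A
  induction A using Multiset.induction with
  | empty =>
    intro B h
    have : B = 0 := by simpa [Multiset.map_eq_zero] using h.symm
    exact ⟨0, by simp, by simp [this]⟩
  | cons z A ih =>
    intro B h
    have hz : z.2 ∈ B.map Prod.fst := by rw [← h]; simp
    obtain ⟨w, hw, hwz⟩ := Multiset.mem_map.1 hz
    have hB : B = w ::ₘ B.erase w := (Multiset.cons_erase hw).symm
    have h' : A.map Prod.snd = (B.erase w).map Prod.fst := by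
      rw [hB, Multiset.map_cons, Multiset.map_cons, hwz] at h
      exact (Multiset.cons_inj_right _).1 h
    obtain ⟨T, hT1, hT2⟩ := ih (B.erase w) h'
    refine ⟨(z.1, z.2, w.2) ::ₘ T, ?_, ?_⟩
    · rw [Multiset.map_cons, hT1]
    · rw [Multiset.map_cons, hT2]
      have hzw : (z.2, w.2) = w := Prod.ext hwz.symm rfl
      rw [hzw, ← hB]

lemma count_product {α β : Type*} [DecidableEq α] [DecidableEq β]
    (s : Multiset α) (t : Multiset β) (x : α) (y : β) :
    Multiset.count (x, y) (s ×ˢ t) = Multiset.count x s * Multiset.count y t := by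
  induction s using Multiset.induction with
  | empty => simp
  | cons a s ih =>
    rw [Multiset.cons_product, Multiset.count_add, ih]
    by_cases hax : a = x
    · subst hax
      have hinj : Function.Injective (Prod.mk a : β → α × β) := fun y₁ y₂ h => by
        simpa using congrArg Prod.snd h
      have h1 : Multiset.count (a, y) (t.map (Prod.mk a)) = Multiset.count y t :=
        Multiset.count_map_eq_count' _ _ hinj _
      rw [h1, Multiset.count_cons_self]
      ring
    · have h1 : Multiset.count (x, y) (t.map (Prod.mk a)) = 0 := by
        rw [Multiset.count_eq_zero]
        intro hmem
        obtain ⟨b, -, hb⟩ := Multiset.mem_map.1 hmem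
        exact hax (congrArg Prod.fst hb)
      rw [h1, Multiset.count_cons_of_ne (Ne.symm hax)]
      simp

lemma le_product_of_marginals {α β : Type*} {γ : Multiset (α × β)} {ξ : Multiset α}
    {η : Multiset β} (h1 : γ.map Prod.fst ≤ ξ) (h2 : γ.map Prod.snd ≤ η) : γ ≤ ξ ×ˢ η := by
  classical
  rw [Multiset.le_iff_count]
  rintro ⟨x, y⟩
  by_cases hz : (x, y) ∈ γ
  · have hy : y ∈ η := Multiset.mem_of_le h2 (Multiset.mem_map_of_mem _ hz)
    have hcy : 1 ≤ Multiset.count y η := Multiset.one_le_count_iff_mem.2 hy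
    have hfil : Multiset.count (x, y) γ ≤ Multiset.count x (γ.map Prod.fst) := by
      rw [Multiset.count_map, Multiset.count_eq_card_filter_eq]
      exact Multiset.card_le_card (Multiset.monotone_filter_right γ
        (fun a ha => by rw [← ha]))
    calc Multiset.count (x, y) γ ≤ Multiset.count x ξ :=
          hfil.trans (Multiset.le_iff_count.1 h1 x)
      _ ≤ Multiset.count x ξ * Multiset.count y η := Nat.le_mul_of_pos_right _ hcy
      _ = Multiset.count (x, y) (ξ ×ˢ η) := (count_product ξ η x y).symm
  · simp [Multiset.count_eq_zero_of_notMem hz]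

/-- Minkowski inequality for multisets of pairs of nonnegative reals. -/
lemma minkowski (M : Multiset (ℝ × ℝ)) {p : ℝ} (hp : 1 ≤ p)
    (h1 : ∀ z ∈ M, 0 ≤ z.1) (h2 : ∀ z ∈ M, 0 ≤ z.2) :
    ((M.map (fun z => (z.1 + z.2) ^ p)).sum) ^ (1 / p) ≤
      ((M.map (fun z => z.1 ^ p)).sum) ^ (1 / p) + ((M.map (fun z => z.2 ^ p)).sum) ^ (1 / p) := by
  set L := M.toList with hL
  have hmem : ∀ i : Fin L.length, L.get i ∈ M := fun i => by
    rw [← Multiset.mem_toList]; exact List.get_mem L i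
  have key : ∀ h : ℝ × ℝ → ℝ, (M.map h).sum = ∑ i : Fin L.length, h (L.get i) := by
    intro h
    conv_lhs => rw [← Multiset.coe_toList M]
    rw [Multiset.map_coe, Multiset.sum_coe, ← List.ofFn_getElem_eq_map, List.sum_ofFn]; rfl
  rw [key, key, key]
  have H := Real.Lp_add_le (Finset.univ) (fun i : Fin L.length => (L.get i).1)
      (fun i => (L.get i).2) hp
  have e1 : ∑ i : Fin L.length, |(L.get i).1 + (L.get i).2| ^ p
      = ∑ i : Fin L.length, ((L.get i).1 + (L.get i).2) ^ p :=
    Finset.sum_congr rfl fun i _ => by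
      rw [abs_of_nonneg (add_nonneg (h1 _ (hmem i)) (h2 _ (hmem i)))]
  have e2 : ∑ i : Fin L.length, |(L.get i).1| ^ p = ∑ i : Fin L.length, (L.get i).1 ^ p :=
    Finset.sum_congr rfl fun i _ => by rw [abs_of_nonneg (h1 _ (hmem i))]
  have e3 : ∑ i : Fin L.length, |(L.get i).2| ^ p = ∑ i : Fin L.length, (L.get i).2 ^ p :=
    Finset.sum_congr rfl fun i _ => by rw [abs_of_nonneg (h2 _ (hmem i))]
  rw [e1, e2, e3] at H
  exact H

variable {X : Type*} [MetricSpace X]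

/-- The matching cost. -/
noncomputable def mCost (C p : ℝ) (ξ η : Multiset X) (γ : Multiset (X × X)) : ℝ :=
  ((Multiset.card ξ : ℝ) + Multiset.card η - 2 * Multiset.card γ) * C ^ p
    + (γ.map (fun z => dist z.1 z.2 ^ p)).sum

/-- The set of costs of admissible matchings. -/
def ttSet (C p : ℝ) (ξ η : Multiset X) : Set ℝ :=
  { c : ℝ | ∃ γ : Multiset (X × X),
    γ.map Prod.fst ≤ ξ ∧ γ.map Prod.snd ≤ η ∧
    c = ((Multiset.card ξ : ℝ) + Multiset.card η - 2 * Multiset.card γ) * C ^ p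
        + (γ.map (fun z => dist z.1 z.2 ^ p)).sum }

lemma ttP_eq (C p : ℝ) (ξ η : Multiset X) : ttP C p ξ η = sInf (ttSet C p ξ η) := rfl

lemma mem_ttSet {C p : ℝ} {ξ η : Multiset X} {γ : Multiset (X × X)}
    (h1 : γ.map Prod.fst ≤ ξ) (h2 : γ.map Prod.snd ≤ η) :
    mCost C p ξ η γ ∈ ttSet C p ξ η := ⟨γ, h1, h2, rfl⟩

lemma ttSet_nonempty (C p : ℝ) (ξ η : Multiset X) : (ttSet C p ξ η).Nonempty :=
  ⟨_, mem_ttSet (γ := 0) (by simp) (by simp)⟩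

lemma ttSet_finite (C p : ℝ) (ξ η : Multiset X) : (ttSet C p ξ η).Finite := by
  classical
  have hsub : ttSet C p ξ η ⊆ (mCost C p ξ η) '' ((ξ ×ˢ η).powerset.toFinset : Finset _) := by
    rintro c ⟨γ, h1, h2, rfl⟩
    exact ⟨γ, by simp [Multiset.mem_powerset, le_product_of_marginals h1 h2], rfl⟩
  exact (((ξ ×ˢ η).powerset.toFinset.finite_toSet).image _).subset hsub

lemma mCost_nonneg {C p : ℝ} (hC : 0 < C) {ξ η : Multiset X} {γ : Multiset (X × X)}
    (h1 : γ.map Prod.fst ≤ ξ) (h2 : γ.map Prod.snd ≤ η) : 0 ≤ mCost C p ξ η γ := by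
  have hl1 : Multiset.card γ ≤ Multiset.card ξ := by
    simpa using Multiset.card_le_card h1
  have hl2 : Multiset.card γ ≤ Multiset.card η := by
    simpa using Multiset.card_le_card h2
  have hCp : (0:ℝ) ≤ C ^ p := Real.rpow_nonneg hC.le p
  have c1 : (Multiset.card γ : ℝ) ≤ Multiset.card ξ := Nat.cast_le.2 hl1
  have c2 : (Multiset.card γ : ℝ) ≤ Multiset.card η := Nat.cast_le.2 hl2
  have hsum : 0 ≤ (γ.map fun z => dist z.1 z.2 ^ p).sum := by
    refine Multiset.sum_nonneg ?_
    intro x hx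
    obtain ⟨z, -, rfl⟩ := Multiset.mem_map.1 hx
    exact Real.rpow_nonneg dist_nonneg p
  exact add_nonneg (mul_nonneg (by linarith) hCp) hsum

lemma ttP_nonneg {C p : ℝ} (hC : 0 < C) (ξ η : Multiset X) : 0 ≤ ttP C p ξ η := by
  rw [ttP_eq]
  refine le_csInf (ttSet_nonempty C p ξ η) ?_
  rintro c ⟨γ, h1, h2, rfl⟩
  exact mCost_nonneg hC h1 h2

lemma ttP_le {C p : ℝ} {ξ η : Multiset X} {γ : Multiset (X × X)}
    (h1 : γ.map Prod.fst ≤ ξ) (h2 : γ.map Prod.snd ≤ η) :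
    ttP C p ξ η ≤ mCost C p ξ η γ := by
  rw [ttP_eq]
  exact csInf_le ((ttSet_finite C p ξ η).bddBelow) (mem_ttSet h1 h2)

lemma ttP_attain (C p : ℝ) (ξ η : Multiset X) :
    ∃ γ : Multiset (X × X), γ.map Prod.fst ≤ ξ ∧ γ.map Prod.snd ≤ η ∧
      ttP C p ξ η = mCost C p ξ η γ := by
  have := (ttSet_nonempty C p ξ η).csInf_mem (ttSet_finite C p ξ η)
  obtain ⟨γ, h1, h2, h3⟩ := this
  exact ⟨γ, h1, h2, h3⟩

end TTProof

/-- The TT-distance is a metric on the space of finite point patterns. -/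
theorem stmt3 {X : Type*} [MetricSpace X] (C p : ℝ) (hC : 0 < C) (hp : 1 ≤ p) :
    (∀ ξ η : Multiset X, 0 ≤ ttDist C p ξ η) ∧
    (∀ ξ η : Multiset X, ttDist C p ξ η = 0 ↔ ξ = η) ∧
    (∀ ξ η : Multiset X, ttDist C p ξ η = ttDist C p η ξ) ∧
    (∀ ξ η ζ : Multiset X, ttDist C p ξ ζ ≤ ttDist C p ξ η + ttDist C p η ζ) := by

  open TTProof in
  have hp0 : 0 < p := lt_of_lt_of_le one_pos hp
  have hCp : (0:ℝ) < C ^ p := Real.rpow_pos_of_pos hC p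
  have hCp0 : (0:ℝ) ≤ C ^ p := hCp.le
  have hinv : (0:ℝ) ≤ 1 / p := by positivity
  have key_nonneg : ∀ ξ η : Multiset X, 0 ≤ ttDist C p ξ η := fun ξ η =>
    Real.rpow_nonneg (ttP_nonneg hC ξ η) _
  have key_symm : ∀ ξ η : Multiset X, ttDist C p ξ η = ttDist C p η ξ := by
    have hsub : ∀ ξ η : Multiset X, ttSet C p ξ η ⊆ ttSet C p η ξ := by
      rintro ξ η c ⟨γ, h1, h2, rfl⟩
      refine ⟨γ.map Prod.swap, ?_, ?_, ?_⟩
      · rw [Multiset.map_map]; exact h2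
      · rw [Multiset.map_map]; exact h1
      · have h3 : (γ.map Prod.swap).map (fun z => dist z.1 z.2 ^ p)
            = γ.map fun z => dist z.1 z.2 ^ p := by
          rw [Multiset.map_map]
          exact Multiset.map_congr rfl fun z _ => by
            simp [Function.comp, dist_comm]
        rw [h3, Multiset.card_map]
        ring
    intro ξ η
    unfold ttDist
    rw [ttP_eq, ttP_eq, Set.Subset.antisymm (hsub ξ η) (hsub η ξ)]
  have key_refl : ∀ ξ : Multiset X, ttDist C p ξ ξ = 0 := by
    intro ξ
    have hcost : mCost C p ξ ξ (ξ.map fun x => (x, x)) = 0 := by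
      unfold mCost
      rw [Multiset.map_map, Multiset.card_map]
      have h4 : ξ.map ((fun z : X × X => dist z.1 z.2 ^ p) ∘ fun x => (x, x))
          = ξ.map fun _ => (0:ℝ) :=
        Multiset.map_congr rfl fun x _ => by
          simp [Real.zero_rpow hp0.ne']
      rw [h4]
      have h5 : (ξ.map fun _ => (0:ℝ)).sum = 0 := by simp
      rw [h5]
      ring
    have hle : ttP C p ξ ξ ≤ 0 := by
      rw [← hcost]
      exact ttP_le (by rw [Multiset.map_map]; simp) (by rw [Multiset.map_map]; simp)
    have h0 : ttP C p ξ ξ = 0 := le_antisymm hle (ttP_nonneg hC ξ ξ)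
    unfold ttDist
    rw [h0, Real.zero_rpow (by positivity)]
  have key_eq : ∀ ξ η : Multiset X, ttDist C p ξ η = 0 ↔ ξ = η := by
    intro ξ η
    constructor
    · intro h
      have h0 : ttP C p ξ η = 0 := by
        have := (Real.rpow_eq_zero_iff_of_nonneg (ttP_nonneg hC ξ η)).1 h
        exact this.1
      obtain ⟨γ, h1, h2, hcost⟩ := ttP_attain C p ξ η
      rw [h0] at hcost
      have hl1 : Multiset.card γ ≤ Multiset.card ξ := by
        simpa using Multiset.card_le_card h1
      have hl2 : Multiset.card γ ≤ Multiset.card η := by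
        simpa using Multiset.card_le_card h2
      have hsum : (0:ℝ) ≤ (γ.map fun z => dist z.1 z.2 ^ p).sum := by
        refine Multiset.sum_nonneg ?_
        intro x hx
        obtain ⟨z, -, rfl⟩ := Multiset.mem_map.1 hx
        exact Real.rpow_nonneg dist_nonneg p
      have hterm : (0:ℝ) ≤ ((Multiset.card ξ : ℝ) + Multiset.card η
          - 2 * Multiset.card γ) * C ^ p := by
        have c1 : (Multiset.card γ : ℝ) ≤ Multiset.card ξ := Nat.cast_le.2 hl1
        have c2 : (Multiset.card γ : ℝ) ≤ Multiset.card η := Nat.cast_le.2 hl2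
        have : (0:ℝ) ≤ (Multiset.card ξ : ℝ) + Multiset.card η - 2 * Multiset.card γ := by
          linarith
        exact mul_nonneg this hCp0
      unfold mCost at hcost
      have hterm0 : ((Multiset.card ξ : ℝ) + Multiset.card η
          - 2 * Multiset.card γ) * C ^ p = 0 := by linarith
      have hsum0 : (γ.map fun z => dist z.1 z.2 ^ p).sum = 0 := by linarith
      have hcard : (Multiset.card ξ : ℝ) + Multiset.card η - 2 * Multiset.card γ = 0 := by
        rcases mul_eq_zero.1 hterm0 with h | h
        · exact h
        · exact absurd h hCp.ne'
      have hcardN : Multiset.card ξ + Multiset.card η = 2 * Multiset.card γ := by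
        have : (Multiset.card ξ : ℝ) + Multiset.card η = 2 * Multiset.card γ := by linarith
        exact_mod_cast this
      have hm : Multiset.card ξ = Multiset.card γ := by omega
      have hn : Multiset.card η = Multiset.card γ := by omega
      have hfst : γ.map Prod.fst = ξ :=
        Multiset.eq_of_le_of_card_le h1 (by rw [Multiset.card_map]; omega)
      have hsnd : γ.map Prod.snd = η :=
        Multiset.eq_of_le_of_card_le h2 (by rw [Multiset.card_map]; omega)
      have hdiag : ∀ z ∈ γ, Prod.fst z = Prod.snd z := by
        intro z hz
        have hz0 : dist z.1 z.2 ^ p = 0 :=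
          Multiset.all_zero_of_le_zero_le_of_sum_eq_zero
            (fun x hx => by
              obtain ⟨w, -, rfl⟩ := Multiset.mem_map.1 hx
              exact Real.rpow_nonneg dist_nonneg p)
            hsum0 _ (Multiset.mem_map_of_mem _ hz)
        have := (Real.rpow_eq_zero_iff_of_nonneg dist_nonneg).1 hz0
        exact dist_eq_zero.1 this.1
      rw [← hfst, ← hsnd]
      exact Multiset.map_congr rfl hdiag
    · rintro rfl
      exact key_refl ξ
  have key_tri : ∀ ξ η ζ : Multiset X, ttDist C p ξ ζ ≤ ttDist C p ξ η + ttDist C p η ζ := by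
    intro ξ η ζ
    classical
    obtain ⟨γ₁, h1f, h1s, hE1⟩ := ttP_attain C p ξ η
    obtain ⟨γ₂, h2f, h2s, hE2⟩ := ttP_attain C p η ζ
    obtain ⟨γ₁', hle1, hmap1⟩ := exists_le_map Prod.snd
      ((γ₁.map Prod.snd) ∩ (γ₂.map Prod.fst)) γ₁ Multiset.inter_le_left
    obtain ⟨γ₂', hle2, hmap2⟩ := exists_le_map Prod.fst
      ((γ₁.map Prod.snd) ∩ (γ₂.map Prod.fst)) γ₂ Multiset.inter_le_right
    obtain ⟨T, hT1, hT2⟩ := glue γ₁' γ₂' (by rw [hmap1, hmap2])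
    have hr₁ : γ₁' + (γ₁ - γ₁') = γ₁ := add_tsub_cancel_of_le hle1
    have hr₂ : γ₂' + (γ₂ - γ₂') = γ₂ := add_tsub_cancel_of_le hle2
    -- cardinality bookkeeping
    have hc1' : Multiset.card γ₁' = Multiset.card ((γ₁.map Prod.snd) ∩ (γ₂.map Prod.fst)) := by
      have := congrArg Multiset.card hmap1; simpa using this
    have hc2' : Multiset.card γ₂' = Multiset.card ((γ₁.map Prod.snd) ∩ (γ₂.map Prod.fst)) := by
      have := congrArg Multiset.card hmap2; simpa using this
    have hcT : Multiset.card T = Multiset.card ((γ₁.map Prod.snd) ∩ (γ₂.map Prod.fst)) := by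
      have := congrArg Multiset.card hT1; simpa [hc1'] using this
    have hkl₁ : Multiset.card ((γ₁.map Prod.snd) ∩ (γ₂.map Prod.fst)) ≤ Multiset.card γ₁ := by
      rw [← hc1']; exact Multiset.card_le_card hle1
    have hkl₂ : Multiset.card ((γ₁.map Prod.snd) ∩ (γ₂.map Prod.fst)) ≤ Multiset.card γ₂ := by
      rw [← hc2']; exact Multiset.card_le_card hle2
    have hl₁m : Multiset.card γ₁ ≤ Multiset.card ξ := by simpa using Multiset.card_le_card h1f
    have hl₁n : Multiset.card γ₁ ≤ Multiset.card η := by simpa using Multiset.card_le_card h1s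
    have hl₂n : Multiset.card γ₂ ≤ Multiset.card η := by simpa using Multiset.card_le_card h2f
    have hl₂q : Multiset.card γ₂ ≤ Multiset.card ζ := by simpa using Multiset.card_le_card h2s
    have hcr₁ : Multiset.card (γ₁ - γ₁')
        = Multiset.card γ₁ - Multiset.card ((γ₁.map Prod.snd) ∩ (γ₂.map Prod.fst)) := by
      rw [Multiset.card_sub hle1, hc1']
    have hcr₂ : Multiset.card (γ₂ - γ₂')
        = Multiset.card γ₂ - Multiset.card ((γ₁.map Prod.snd) ∩ (γ₂.map Prod.fst)) := by
      rw [Multiset.card_sub hle2, hc2']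
    have hunion : Multiset.card γ₁ + Multiset.card γ₂
        ≤ Multiset.card η + Multiset.card ((γ₁.map Prod.snd) ∩ (γ₂.map Prod.fst)) := by
      have hu := congrArg Multiset.card
        (Multiset.union_add_inter (γ₁.map Prod.snd) (γ₂.map Prod.fst))
      rw [Multiset.card_add, Multiset.card_add, Multiset.card_map, Multiset.card_map] at hu
      have hle : Multiset.card ((γ₁.map Prod.snd) ∪ (γ₂.map Prod.fst)) ≤ Multiset.card η :=
        Multiset.card_le_card (Multiset.union_le h1s h2f)
      omega
    -- the composed matching
    set δ : Multiset (X × X) := T.map (fun t => (t.1, t.2.2)) with hδ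
    have hδf : δ.map Prod.fst ≤ ξ := by
      have e : δ.map Prod.fst = γ₁'.map Prod.fst := by
        rw [hδ, Multiset.map_map, ← hT1, Multiset.map_map]; rfl
      rw [e]; exact le_trans (Multiset.map_le_map hle1) h1f
    have hδs : δ.map Prod.snd ≤ ζ := by
      have e : δ.map Prod.snd = γ₂'.map Prod.snd := by
        rw [hδ, Multiset.map_map, ← hT2, Multiset.map_map]; rfl
      rw [e]; exact le_trans (Multiset.map_le_map hle2) h2s
    -- the comparison multiset for Minkowski
    set M : Multiset (ℝ × ℝ) :=
      T.map (fun t => (dist t.1 t.2.1, dist t.2.1 t.2.2))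
      + (γ₁ - γ₁').map (fun z => (dist z.1 z.2, C))
      + (γ₂ - γ₂').map (fun z => (C, dist z.1 z.2))
      + Multiset.replicate (Multiset.card ξ - Multiset.card γ₁) (C, 0)
      + Multiset.replicate (Multiset.card ζ - Multiset.card γ₂) (0, C) with hM
    have hMnon1 : ∀ z ∈ M, 0 ≤ z.1 := by
      intro z hz
      simp only [hM, Multiset.mem_add, Multiset.mem_map, Multiset.mem_replicate] at hz
      rcases hz with ((((⟨t, -, rfl⟩ | ⟨w, -, rfl⟩) | ⟨w, -, rfl⟩) | ⟨-, rfl⟩) | ⟨-, rfl⟩) <;>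
        first
          | exact dist_nonneg
          | exact hC.le
          | exact le_refl 0
    have hMnon2 : ∀ z ∈ M, 0 ≤ z.2 := by
      intro z hz
      simp only [hM, Multiset.mem_add, Multiset.mem_map, Multiset.mem_replicate] at hz
      rcases hz with ((((⟨t, -, rfl⟩ | ⟨w, -, rfl⟩) | ⟨w, -, rfl⟩) | ⟨-, rfl⟩) | ⟨-, rfl⟩) <;>
        first
          | exact dist_nonneg
          | exact hC.le
          | exact le_refl 0
    have expand : ∀ f : ℝ × ℝ → ℝ, (M.map f).sum
        = (T.map fun t => f (dist t.1 t.2.1, dist t.2.1 t.2.2)).sum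
          + ((γ₁ - γ₁').map fun z => f (dist z.1 z.2, C)).sum
          + ((γ₂ - γ₂').map fun z => f (C, dist z.1 z.2)).sum
          + ((Multiset.card ξ - Multiset.card γ₁ : ℕ) : ℝ) * f (C, 0)
          + ((Multiset.card ζ - Multiset.card γ₂ : ℕ) : ℝ) * f (0, C) := by
      intro f
      simp only [hM, Multiset.map_add, Multiset.sum_add, Multiset.map_map, Function.comp,
        Multiset.map_replicate, Multiset.sum_replicate, nsmul_eq_mul]
    -- bound the first coordinate sum by the cost of γ₁
    have hA : (M.map fun z => z.1 ^ p).sum ≤ mCost C p ξ η γ₁ := by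
      rw [expand]
      simp only [Real.zero_rpow hp0.ne', mul_zero, add_zero]
      have e0 : T.map (fun t => dist t.1 t.2.1 ^ p) = γ₁'.map fun z => dist z.1 z.2 ^ p := by
        rw [← hT1, Multiset.map_map]; rfl
      have e1 : (T.map fun t => dist t.1 t.2.1 ^ p).sum
            + ((γ₁ - γ₁').map fun z => dist z.1 z.2 ^ p).sum
          = (γ₁.map fun z => dist z.1 z.2 ^ p).sum := by
        rw [e0, ← Multiset.sum_add, ← Multiset.map_add, hr₁]
      have e2 : ((γ₂ - γ₂').map fun _ : X × X => C ^ p).sum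
          = (Multiset.card (γ₂ - γ₂') : ℝ) * C ^ p := by
        simp [Multiset.map_const', Multiset.sum_replicate, nsmul_eq_mul]
      have hcoef : (Multiset.card (γ₂ - γ₂') : ℝ)
            + ((Multiset.card ξ - Multiset.card γ₁ : ℕ) : ℝ)
          ≤ (Multiset.card ξ : ℝ) + Multiset.card η - 2 * Multiset.card γ₁ := by
        rw [hcr₂, Nat.cast_sub hkl₂, Nat.cast_sub hl₁m]
        have := (Nat.cast_le (α := ℝ)).2 hunion
        push_cast at this ⊢
        linarith
      have hmul : (Multiset.card (γ₂ - γ₂') : ℝ) * C ^ p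
            + ((Multiset.card ξ - Multiset.card γ₁ : ℕ) : ℝ) * C ^ p
          ≤ ((Multiset.card ξ : ℝ) + Multiset.card η - 2 * Multiset.card γ₁) * C ^ p := by
        rw [← add_mul]
        exact mul_le_mul_of_nonneg_right hcoef hCp0
      unfold mCost
      linarith [e1, e2, hmul]
    -- bound the second coordinate sum by the cost of γ₂
    have hB : (M.map fun z => z.2 ^ p).sum ≤ mCost C p η ζ γ₂ := by
      rw [expand]
      simp only [Real.zero_rpow hp0.ne', mul_zero, add_zero]
      have e0 : T.map (fun t => dist t.2.1 t.2.2 ^ p) = γ₂'.map fun z => dist z.1 z.2 ^ p := by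
        rw [← hT2, Multiset.map_map]; rfl
      have e1 : (T.map fun t => dist t.2.1 t.2.2 ^ p).sum
            + ((γ₂ - γ₂').map fun z => dist z.1 z.2 ^ p).sum
          = (γ₂.map fun z => dist z.1 z.2 ^ p).sum := by
        rw [e0, ← Multiset.sum_add, ← Multiset.map_add, hr₂]
      have e2 : ((γ₁ - γ₁').map fun _ : X × X => C ^ p).sum
          = (Multiset.card (γ₁ - γ₁') : ℝ) * C ^ p := by
        simp [Multiset.map_const', Multiset.sum_replicate, nsmul_eq_mul]
      have hcoef : (Multiset.card (γ₁ - γ₁') : ℝ)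
            + ((Multiset.card ζ - Multiset.card γ₂ : ℕ) : ℝ)
          ≤ (Multiset.card η : ℝ) + Multiset.card ζ - 2 * Multiset.card γ₂ := by
        rw [hcr₁, Nat.cast_sub hkl₁, Nat.cast_sub hl₂q]
        have := (Nat.cast_le (α := ℝ)).2 hunion
        push_cast at this ⊢
        linarith
      have hmul : (Multiset.card (γ₁ - γ₁') : ℝ) * C ^ p
            + ((Multiset.card ζ - Multiset.card γ₂ : ℕ) : ℝ) * C ^ p
          ≤ ((Multiset.card η : ℝ) + Multiset.card ζ - 2 * Multiset.card γ₂) * C ^ p := by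
        rw [← add_mul]
        exact mul_le_mul_of_nonneg_right hcoef hCp0
      unfold mCost
      linarith [e1, e2, hmul]
    -- bound the cost of the composed matching by the Minkowski mixed sum
    have hD : mCost C p ξ ζ δ ≤ (M.map fun z => (z.1 + z.2) ^ p).sum := by
      rw [expand]
      simp only [add_zero, zero_add]
      have e0 : δ.map (fun z => dist z.1 z.2 ^ p) = T.map fun t => dist t.1 t.2.2 ^ p := by
        rw [hδ, Multiset.map_map]; rfl
      have b1 : (T.map fun t => dist t.1 t.2.2 ^ p).sum
          ≤ (T.map fun t => (dist t.1 t.2.1 + dist t.2.1 t.2.2) ^ p).sum :=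
        Multiset.sum_map_le_sum_map _ _ fun t _ =>
          Real.rpow_le_rpow dist_nonneg (dist_triangle _ _ _) hp0.le
      have b2 : (Multiset.card (γ₁ - γ₁') : ℝ) * C ^ p
          ≤ ((γ₁ - γ₁').map fun z => (dist z.1 z.2 + C) ^ p).sum := by
        have : ((γ₁ - γ₁').map fun _ : X × X => C ^ p).sum
            = (Multiset.card (γ₁ - γ₁') : ℝ) * C ^ p := by
          simp [Multiset.map_const', Multiset.sum_replicate, nsmul_eq_mul]
        rw [← this]
        exact Multiset.sum_map_le_sum_map _ _ fun z _ =>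
          Real.rpow_le_rpow hC.le (le_add_of_nonneg_left dist_nonneg) hp0.le
      have b3 : (Multiset.card (γ₂ - γ₂') : ℝ) * C ^ p
          ≤ ((γ₂ - γ₂').map fun z => (C + dist z.1 z.2) ^ p).sum := by
        have : ((γ₂ - γ₂').map fun _ : X × X => C ^ p).sum
            = (Multiset.card (γ₂ - γ₂') : ℝ) * C ^ p := by
          simp [Multiset.map_const', Multiset.sum_replicate, nsmul_eq_mul]
        rw [← this]
        exact Multiset.sum_map_le_sum_map _ _ fun z _ =>
          Real.rpow_le_rpow hC.le (le_add_of_nonneg_right dist_nonneg) hp0.le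
      have hcoef : ((Multiset.card ξ : ℝ) + Multiset.card ζ - 2 * Multiset.card δ) * C ^ p
          = (Multiset.card (γ₁ - γ₁') : ℝ) * C ^ p + (Multiset.card (γ₂ - γ₂') : ℝ) * C ^ p
            + ((Multiset.card ξ - Multiset.card γ₁ : ℕ) : ℝ) * C ^ p
            + ((Multiset.card ζ - Multiset.card γ₂ : ℕ) : ℝ) * C ^ p := by
        have hcδ : Multiset.card δ
            = Multiset.card ((γ₁.map Prod.snd) ∩ (γ₂.map Prod.fst)) := by
          rw [hδ, Multiset.card_map, hcT]
        rw [hcδ, hcr₁, hcr₂, Nat.cast_sub hkl₁, Nat.cast_sub hkl₂, Nat.cast_sub hl₁m,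
          Nat.cast_sub hl₂q]
        have c1 := (Nat.cast_le (α := ℝ)).2 hkl₁
        have c2 := (Nat.cast_le (α := ℝ)).2 hl₁m
        push_cast at c1 c2 ⊢
        ring
      unfold mCost
      rw [e0, hcoef]
      linarith [b1, b2, b3]
    have hA0 : 0 ≤ (M.map fun z => z.1 ^ p).sum := by
      refine Multiset.sum_nonneg ?_
      intro x hx
      obtain ⟨z, hzM, rfl⟩ := Multiset.mem_map.1 hx
      exact Real.rpow_nonneg (hMnon1 z hzM) p
    have hB0 : 0 ≤ (M.map fun z => z.2 ^ p).sum := by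
      refine Multiset.sum_nonneg ?_
      intro x hx
      obtain ⟨z, hzM, rfl⟩ := Multiset.mem_map.1 hx
      exact Real.rpow_nonneg (hMnon2 z hzM) p
    calc ttDist C p ξ ζ = ttP C p ξ ζ ^ (1 / p) := rfl
      _ ≤ mCost C p ξ ζ δ ^ (1 / p) :=
          Real.rpow_le_rpow (ttP_nonneg hC ξ ζ) (ttP_le hδf hδs) hinv
      _ ≤ ((M.map fun z => (z.1 + z.2) ^ p).sum) ^ (1 / p) :=
          Real.rpow_le_rpow (mCost_nonneg hC hδf hδs) hD hinv
      _ ≤ ((M.map fun z => z.1 ^ p).sum) ^ (1 / p) + ((M.map fun z => z.2 ^ p).sum) ^ (1 / p) :=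
          minkowski M hp hMnon1 hMnon2
      _ ≤ mCost C p ξ η γ₁ ^ (1 / p) + mCost C p η ζ γ₂ ^ (1 / p) :=
          add_le_add (Real.rpow_le_rpow hA0 hA hinv) (Real.rpow_le_rpow hB0 hB hinv)
      _ = ttDist C p ξ η + ttDist C p η ζ := by
          unfold ttDist
          rw [hE1, hE2]
  exact ⟨key_nonneg, key_eq, key_symm, key_tri⟩
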